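/- Let v : [0,∞) → [0,∞) be continuous and satisfy v(t) ≤ K e^{ρ t} a + L K_0 ∫_0^t e^{−γ(t−s)} v(s) ds for all t ≥ 0, where K, K_0, L, a > 0, γ > 0, ρ < 0, and ρ + γ ≠ L K_0, with L K_0 − γ > ρ. Then v(t) ≤ a [K e^{ρ t} + (K L K_0/(L K_0 − γ − ρ)) e^{(L K_0 − γ)t}] for all t ≥ 0. -/

import Mathlib

open Real

/-- Gronwall-type estimate for the stable projection of the difference of two solutions. -/
theorem gronwall_stable_projection_estimate
    (v : ℝ → ℝ) (hv_cont : Continuous v) (hv_nonneg : ∀ t, 0 ≤ t → 0 ≤ v t)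
    (K K0 L a γ ρ : ℝ)
    (hK : 0 < K) (hK0 : 0 < K0) (hL : 0 < L) (ha : 0 < a) (hγ : 0 < γ) (hρ : ρ < 0)
    (hne : ρ + γ ≠ L * K0) (hgap : ρ < L * K0 - γ)
    (hineq : ∀ t : ℝ, 0 ≤ t →
      v t ≤ K * exp (ρ * t) * a + L * K0 * ∫ s in (0:ℝ)..t, exp (-γ * (t - s)) * v s) :
    ∀ t : ℝ, 0 ≤ t →
      v t ≤ a * (K * exp (ρ * t) + (K * L * K0 / (L * K0 - γ - ρ)) * exp ((L * K0 - γ) * t)) := by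
  set c := L * K0 with hcdef
  set b := ρ + γ with hbdef
  have hc0 : 0 < c := mul_pos hL hK0
  have hbc : b - c < 0 := by simp only [hbdef]; linarith
  have hbcne : b - c ≠ 0 := ne_of_lt hbc
  have hcb0 : 0 < c - b := by linarith
  have hcbne : c - b ≠ 0 := ne_of_gt hcb0
  set w : ℝ → ℝ := fun s => exp (γ * s) * v s with hwdef
  have contw : Continuous w :=
    (Real.continuous_exp.comp (continuous_const.mul continuous_id)).mul hv_cont
  set F : ℝ → ℝ := fun u => ∫ s in (0:ℝ)..u, w s with hFdef
  have hF : ∀ u : ℝ, HasDerivAt F (w u) u := fun u =>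
    (contw.integral_hasStrictDerivAt 0 u).hasDerivAt
  -- the transformed integral inequality
  have hw : ∀ u : ℝ, 0 ≤ u → w u ≤ K * a * exp (b * u) + c * F u := by
    intro u hu
    have h2 : exp (γ * u) * v u ≤ exp (γ * u) *
        (K * exp (ρ * u) * a + c * ∫ s in (0:ℝ)..u, exp (-γ * (u - s)) * v s) :=
      mul_le_mul_of_nonneg_left (hineq u hu) (exp_nonneg _)
    have h3 : exp (γ * u) * ∫ s in (0:ℝ)..u, exp (-γ * (u - s)) * v s = F u := by
      rw [← intervalIntegral.integral_const_mul]
      apply intervalIntegral.integral_congr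
      intro s _
      show exp (γ * u) * (exp (-γ * (u - s)) * v s) = exp (γ * s) * v s
      rw [← mul_assoc, ← exp_add]
      ring_nf
    have h4 : exp (γ * u) * (K * exp (ρ * u) * a) = K * a * exp (b * u) := by
      rw [show (b : ℝ) * u = ρ * u + γ * u by rw [hbdef]; ring, exp_add]
      ring
    calc w u = exp (γ * u) * v u := rfl
      _ ≤ _ := h2
      _ = K * a * exp (b * u) + c * F u := by rw [mul_add, h4, mul_left_comm, h3]
  -- the auxiliary function h
  set g : ℝ → ℝ := fun u => K * a * exp (b * u) with hgdef
  set G : ℝ → ℝ := fun u => ∫ s in (0:ℝ)..u, exp (-c * s) * g s with hGdef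
  have contg : Continuous fun s => exp (-c * s) * g s := by
    apply Continuous.mul
    · exact Real.continuous_exp.comp (continuous_const.mul continuous_id)
    · exact continuous_const.mul (Real.continuous_exp.comp (continuous_const.mul continuous_id))
  have hG : ∀ u : ℝ, HasDerivAt G (exp (-c * u) * g u) u := fun u =>
    (contg.integral_hasStrictDerivAt 0 u).hasDerivAt
  have hE : ∀ u : ℝ, HasDerivAt (fun s => exp (-c * s)) (-c * exp (-c * u)) u := by
    intro u
    have h1 : HasDerivAt (fun s : ℝ => -c * s) (-c) u := by
      simpa using (hasDerivAt_id u).const_mul (-c)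
    simpa [mul_comm] using h1.exp
  set h : ℝ → ℝ := fun u => G u - exp (-c * u) * F u with hhdef
  have hh : ∀ u : ℝ, HasDerivAt h
      (exp (-c * u) * g u - (-c * exp (-c * u) * F u + exp (-c * u) * w u)) u := by
    intro u
    exact (hG u).sub ((hE u).mul (hF u))
  have hmono : MonotoneOn h (Set.Ici (0:ℝ)) := by
    apply monotoneOn_of_deriv_nonneg (convex_Ici 0)
    · exact fun u _ => ((hh u).differentiableAt).continuousAt.continuousWithinAt
    · intro u _
      exact (hh u).differentiableAt.differentiableWithinAt
    · intro u hu
      rw [interior_Ici] at hu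
      rw [(hh u).deriv]
      have hwu := hw u (le_of_lt hu)
      have key : exp (-c * u) * g u - (-c * exp (-c * u) * F u + exp (-c * u) * w u)
          = exp (-c * u) * (g u + c * F u - w u) := by ring
      rw [key]
      apply mul_nonneg (exp_nonneg _)
      simp only [hgdef]
      linarith
  intro t ht
  have h0 : h 0 = 0 := by
    simp [hhdef, hGdef, hFdef]
  have hht : 0 ≤ h t := by
    have := hmono Set.self_mem_Ici (Set.mem_Ici.mpr ht) ht
    rw [h0] at this
    exact this
  have f1 : exp (-c * t) * F t ≤ G t := by
    have : h t = G t - exp (-c * t) * F t := rfl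
    linarith [this ▸ hht]
  have f4 : exp (c * t) * exp (-c * t) = 1 := by
    rw [← exp_add, show c * t + -c * t = 0 by ring, exp_zero]
  have hFt : F t ≤ exp (c * t) * G t := by
    have := mul_le_mul_of_nonneg_left f1 (exp_nonneg (c * t))
    rwa [← mul_assoc, f4, one_mul] at this
  -- compute G explicitly
  have hP : ∀ s : ℝ, HasDerivAt (fun s => K * a / (b - c) * exp ((b - c) * s))
      (exp (-c * s) * g s) s := by
    intro s
    have h1 : HasDerivAt (fun s : ℝ => (b - c) * s) (b - c) s := by
      simpa using (hasDerivAt_id s).const_mul (b - c)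
    have h2 := ((Real.hasDerivAt_exp ((b - c) * s)).comp s h1).const_mul (K * a / (b - c))
    convert h2 using 1
    show exp (-c * s) * (K * a * exp (b * s)) = K * a / (b - c) * (exp ((b - c) * s) * (b - c))
    rw [show (b - c) * s = b * s + -c * s by ring, exp_add]
    field_simp
    all_goals rfl
  have f2 : G t = K * a / (b - c) * (exp ((b - c) * t) - 1) := by
    have := intervalIntegral.integral_eq_sub_of_hasDerivAt
      (fun s _ => hP s) (contg.intervalIntegrable 0 t)
    simp only [hGdef]
    rw [this]
    simp [mul_sub]
  have f3 : exp (c * t) * exp ((b - c) * t) = exp (b * t) := by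
    rw [← exp_add, show c * t + (b - c) * t = b * t by ring]
  have expand : c * (exp (c * t) * G t) = c * K * a / (c - b) * (exp (c * t) - exp (b * t)) := by
    rw [f2, ← f3]
    field_simp
    ring
  have coef : 0 ≤ c * K * a / (c - b) :=
    div_nonneg (by positivity) (le_of_lt hcb0)
  have step : c * F t ≤ c * K * a / (c - b) * exp (c * t) := by
    have h1 : c * F t ≤ c * (exp (c * t) * G t) :=
      mul_le_mul_of_nonneg_left hFt (le_of_lt hc0)
    have h2 : c * K * a / (c - b) * (exp (c * t) - exp (b * t))
        ≤ c * K * a / (c - b) * exp (c * t) :=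
      mul_le_mul_of_nonneg_left (by linarith [exp_nonneg (b * t)]) coef
    linarith [expand ▸ h1]
  have wbound : w t ≤ K * a * exp (b * t) + c * K * a / (c - b) * exp (c * t) := by
    have := hw t ht
    linarith
  -- convert back to v
  have e1 : exp (b * t) * exp (-(γ * t)) = exp (ρ * t) := by
    rw [← exp_add, show b * t + -(γ * t) = ρ * t by rw [hbdef]; ring]
  have e2 : exp (c * t) * exp (-(γ * t)) = exp ((c - γ) * t) := by
    rw [← exp_add, show c * t + -(γ * t) = (c - γ) * t by ring]
  have e3 : exp (-(γ * t)) * w t = v t := by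
    show exp (-(γ * t)) * (exp (γ * t) * v t) = v t
    rw [← mul_assoc, ← exp_add, show -(γ * t) + γ * t = 0 by ring, exp_zero, one_mul]
  have hvle : v t ≤ K * a * exp (ρ * t) + c * K * a / (c - b) * exp ((c - γ) * t) := by
    have hmul := mul_le_mul_of_nonneg_left wbound (exp_nonneg (-(γ * t)))
    rw [e3] at hmul
    have erhs : exp (-(γ * t)) * (K * a * exp (b * t) + c * K * a / (c - b) * exp (c * t))
        = K * a * exp (ρ * t) + c * K * a / (c - b) * exp ((c - γ) * t) := by
      linear_combination (K * a) * e1 + (c * K * a / (c - b)) * e2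
    linarith [erhs ▸ hmul]
  have hd : c - γ - ρ = c - b := by rw [hbdef]; ring
  have hKc : K * L * K0 = K * c := by rw [hcdef]; ring
  rw [hd, hKc]
  have final : a * (K * exp (ρ * t) + K * c / (c - b) * exp ((c - γ) * t))
      = K * a * exp (ρ * t) + c * K * a / (c - b) * exp ((c - γ) * t) := by ring
  linarith [final]
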